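/- Let H be a ψ-expander on n vertices, H' ⊆ H a subgraph with |E(H) \ E(H')| ≤ (ψ/2)·b·n for some b ∈ [0,1], and suppose there is an embedding of H' into G with congestion C. Then for every cut (S, S̄) with b·n ≤ |S| ≤ n/2, the sparsity Ψ_G(S) = |E_G(S,S̄)|/|S| is at least ψ/(2C). -/

import Mathlib

open Finset
open scoped Classical

/-- Number of edges of `G` with exactly one endpoint in `S`. -/
noncomputable def cutCard {V : Type*} [Fintype V] (G : SimpleGraph V) (S : Finset V) : ℕ :=
  (Finset.univ.filter (fun p : V × V => p.1 ∈ S ∧ p.2 ∉ S ∧ G.Adj p.1 p.2)).card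

/-- If `H` is a `ψ`-expander on `n` vertices, `H' ⊆ H` misses at
most `(ψ/2)·b·n` edges of `H`, and `H'` embeds into `G` with congestion at most `C`,
then every cut `(S, S̄)` with `b·n ≤ |S| ≤ n/2` has sparsity at least `ψ/(2C)`,
i.e. `|E_G(S, S̄)| ≥ (ψ/(2C))·|S|`. -/
theorem stmt1 {V : Type*} [Fintype V] [LinearOrder V] (G H H' : SimpleGraph V)
    (ψ C b : ℝ) (hψ : 0 < ψ) (hC : 0 < C) (hb0 : 0 ≤ b) (hb1 : b ≤ 1)
    (hsub : H' ≤ H)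
    (hexp : ∀ S : Finset V, S.Nonempty → S ≠ Finset.univ →
      ψ * min (S.card : ℝ) ((Finset.univ \ S).card : ℝ) ≤ (cutCard H S : ℝ))
    (hmiss : ((H.edgeFinset \ H'.edgeFinset).card : ℝ) ≤ ψ / 2 * b * (Fintype.card V))
    (P : ∀ u v : V, H'.Adj u v → G.Walk u v)
    (hpath : ∀ (u v : V) (h : H'.Adj u v), (P u v h).IsPath)
    (hcong : ∀ e ∈ G.edgeSet,
      ((Finset.univ.filter (fun p : V × V => p.1 < p.2 ∧
          ∃ h : H'.Adj p.1 p.2, e ∈ (P p.1 p.2 h).edges)).card : ℝ) ≤ C) :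
    ∀ S : Finset V, b * (Fintype.card V) ≤ (S.card : ℝ) →
      2 * (S.card : ℝ) ≤ (Fintype.card V) →
      ψ / (2 * C) * (S.card : ℝ) ≤ (cutCard G S : ℝ) := by
  intro S hS1 hS2
  by_cases hSne : S.Nonempty
  swap
  · rw [Finset.not_nonempty_iff_eq_empty] at hSne
    subst hSne
    simp
  have hScard_pos : 0 < S.card := hSne.card_pos
  have hSle : S.card ≤ Fintype.card V := Finset.card_le_univ S
  have hSneq : S ≠ Finset.univ := by
    intro h
    rw [h, Finset.card_univ] at hS2
    have h0 : (0:ℝ) < (Fintype.card V : ℝ) := by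
      have : 0 < Fintype.card V := lt_of_lt_of_le hScard_pos (by rw [h, Finset.card_univ])
      exact_mod_cast this
    linarith
  -- Step 1 : expansion bound for H
  have hmin : min (S.card : ℝ) ((Finset.univ \ S).card : ℝ) = (S.card : ℝ) := by
    rw [Finset.card_univ_diff, min_eq_left]
    rw [Nat.cast_sub hSle]
    linarith
  have h1 : ψ * (S.card : ℝ) ≤ (cutCard H S : ℝ) := by
    have := hexp S hSne hSneq
    rwa [hmin] at this
  -- Step 2 : cutCard H S ≤ cutCard H' S + missing edges
  have h2 : (cutCard H S : ℝ) ≤ (cutCard H' S : ℝ) +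
      ((H.edgeFinset \ H'.edgeFinset).card : ℝ) := by
    have hsubset : (Finset.univ.filter (fun p : V × V => p.1 ∈ S ∧ p.2 ∉ S ∧ H'.Adj p.1 p.2)) ⊆
        (Finset.univ.filter (fun p : V × V => p.1 ∈ S ∧ p.2 ∉ S ∧ H.Adj p.1 p.2)) := by
      intro p hp
      simp only [Finset.mem_filter] at hp ⊢
      exact ⟨hp.1, hp.2.1, hp.2.2.1, hsub hp.2.2.2⟩
    have hdiff : ((Finset.univ.filter (fun p : V × V => p.1 ∈ S ∧ p.2 ∉ S ∧ H.Adj p.1 p.2)) \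
        (Finset.univ.filter (fun p : V × V => p.1 ∈ S ∧ p.2 ∉ S ∧ H'.Adj p.1 p.2))).card ≤
        (H.edgeFinset \ H'.edgeFinset).card := by
      apply Finset.card_le_card_of_injOn (fun p => s(p.1, p.2))
      · intro p hp
        simp only [Finset.mem_coe, Finset.mem_sdiff, Finset.mem_filter] at hp
        obtain ⟨⟨-, hp1, hp2, hadj⟩, hnot⟩ := hp
        have hnadj : ¬ H'.Adj p.1 p.2 := by
          intro hadj'
          exact hnot (by simp [hp1, hp2, hadj'])
        simp only [Finset.mem_coe, Finset.mem_sdiff, SimpleGraph.mem_edgeFinset, SimpleGraph.mem_edgeSet]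
        exact ⟨hadj, hnadj⟩
      · intro p hp q hq heq
        simp only [Finset.coe_sdiff, Set.mem_diff, Finset.mem_coe, Finset.mem_filter] at hp hq
        obtain ⟨⟨-, hp1, hp2, -⟩, -⟩ := hp
        obtain ⟨⟨-, hq1, hq2, -⟩, -⟩ := hq
        rw [Sym2.eq_iff] at heq
        rcases heq with ⟨h1, h2⟩ | ⟨h1, h2⟩
        · exact Prod.ext h1 h2
        · exact absurd (h1 ▸ hp1) hq2
    have := Finset.card_sdiff_add_card_eq_card hsubset
    have eH : cutCard H S = (Finset.univ.filter
        (fun p : V × V => p.1 ∈ S ∧ p.2 ∉ S ∧ H.Adj p.1 p.2)).card := by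
      unfold cutCard; congr 1; ext p; simp
    have eH' : cutCard H' S = (Finset.univ.filter
        (fun p : V × V => p.1 ∈ S ∧ p.2 ∉ S ∧ H'.Adj p.1 p.2)).card := by
      unfold cutCard; congr 1; ext p; simp
    rw [eH, eH']
    have hnat : (Finset.univ.filter (fun p : V × V => p.1 ∈ S ∧ p.2 ∉ S ∧ H.Adj p.1 p.2)).card ≤
        (Finset.univ.filter (fun p : V × V => p.1 ∈ S ∧ p.2 ∉ S ∧ H'.Adj p.1 p.2)).card +
        (H.edgeFinset \ H'.edgeFinset).card := by omega
    exact_mod_cast hnat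
  -- Step 3 : cutCard H' S ≤ C * cutCard G S
  have h3 : (cutCard H' S : ℝ) ≤ C * (cutCard G S : ℝ) := by
    classical
    set A := Finset.univ.filter (fun p : V × V => p.1 ∈ S ∧ p.2 ∉ S ∧ H'.Adj p.1 p.2) with hA
    set B := Finset.univ.filter (fun p : V × V => p.1 ∈ S ∧ p.2 ∉ S ∧ G.Adj p.1 p.2) with hB
    -- the crossing-dart choice function
    let f : V × V → V × V := fun p =>
      if h : p.1 ∈ S ∧ p.2 ∉ S ∧ H'.Adj p.1 p.2 then
        if hlt : p.1 < p.2 then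
          let d := ((P p.1 p.2 h.2.2).exists_boundary_dart (S : Set V)
            (by exact_mod_cast h.1) (by exact_mod_cast h.2.1)).choose
          (d.toProd.1, d.toProd.2)
        else
          let d := ((P p.2 p.1 h.2.2.symm).exists_boundary_dart ((S : Set V)ᶜ)
            (by simp [h.2.1]) (by simp [h.1])).choose
          (d.toProd.2, d.toProd.1)
      else p
    let g : V × V → V × V := fun p => if p.1 < p.2 then p else p.swap
    have key : ∀ p ∈ A, f p ∈ B ∧ (g p).1 < (g p).2 ∧
        ∃ h : H'.Adj (g p).1 (g p).2, s((f p).1, (f p).2) ∈ (P (g p).1 (g p).2 h).edges := by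
      intro p hp
      simp only [hA, Finset.mem_filter] at hp
      obtain ⟨-, hp1, hp2, hadj⟩ := hp
      have hcond : p.1 ∈ S ∧ p.2 ∉ S ∧ H'.Adj p.1 p.2 := ⟨hp1, hp2, hadj⟩
      have hne : p.1 ≠ p.2 := hadj.ne
      by_cases hlt : p.1 < p.2
      · have hfp : f p =
            (((P p.1 p.2 hcond.2.2).exists_boundary_dart (S : Set V)
              (by exact_mod_cast hcond.1) (by exact_mod_cast hcond.2.1)).choose.toProd.1,
             ((P p.1 p.2 hcond.2.2).exists_boundary_dart (S : Set V)
              (by exact_mod_cast hcond.1) (by exact_mod_cast hcond.2.1)).choose.toProd.2) := by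
          simp only [f]
          rw [dif_pos hcond, dif_pos hlt]
        have hgp : g p = p := by simp only [g, if_pos hlt]
        obtain ⟨hd, hd1, hd2⟩ := ((P p.1 p.2 hcond.2.2).exists_boundary_dart (S : Set V)
            (by exact_mod_cast hcond.1) (by exact_mod_cast hcond.2.1)).choose_spec
        set d := ((P p.1 p.2 hcond.2.2).exists_boundary_dart (S : Set V)
            (by exact_mod_cast hcond.1) (by exact_mod_cast hcond.2.1)).choose
        refine ⟨?_, ?_, ?_⟩
        · rw [hfp]
          simp only [hB, Finset.mem_filter, Finset.mem_univ, true_and]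
          exact ⟨by exact_mod_cast hd1, by exact_mod_cast hd2, d.adj⟩
        · rw [hgp]; exact hlt
        · rw [hgp, hfp]
          refine ⟨hcond.2.2, ?_⟩
          have : s(d.toProd.1, d.toProd.2) = d.edge := rfl
          rw [this]
          exact List.mem_map_of_mem (f := SimpleGraph.Dart.edge) hd
      · have hlt' : p.2 < p.1 := lt_of_le_of_ne (not_lt.mp hlt) (Ne.symm hne)
        have hfp : f p =
            (((P p.2 p.1 hcond.2.2.symm).exists_boundary_dart ((S : Set V)ᶜ)
              (by simp [hcond.2.1]) (by simp [hcond.1])).choose.toProd.2,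
             ((P p.2 p.1 hcond.2.2.symm).exists_boundary_dart ((S : Set V)ᶜ)
              (by simp [hcond.2.1]) (by simp [hcond.1])).choose.toProd.1) := by
          simp only [f]
          rw [dif_pos hcond, dif_neg hlt]
        have hgp : g p = p.swap := by simp only [g, if_neg hlt]
        obtain ⟨hd, hd1, hd2⟩ := ((P p.2 p.1 hcond.2.2.symm).exists_boundary_dart ((S : Set V)ᶜ)
            (by simp [hcond.2.1]) (by simp [hcond.1])).choose_spec
        set d := ((P p.2 p.1 hcond.2.2.symm).exists_boundary_dart ((S : Set V)ᶜ)
            (by simp [hcond.2.1]) (by simp [hcond.1])).choose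
        have hd1' : d.toProd.1 ∉ S := by simpa using hd1
        have hd2' : d.toProd.2 ∈ S := by simpa using hd2
        refine ⟨?_, ?_, ?_⟩
        · rw [hfp]
          simp only [hB, Finset.mem_filter, Finset.mem_univ, true_and]
          exact ⟨hd2', hd1', d.adj.symm⟩
        · rw [hgp]; exact hlt'
        · rw [hgp, hfp]
          refine ⟨hcond.2.2.symm, ?_⟩
          have : s(d.toProd.2, d.toProd.1) = d.edge := Sym2.eq_swap
          rw [this]
          exact List.mem_map_of_mem (f := SimpleGraph.Dart.edge) hd
    have hmaps : ∀ p ∈ A, f p ∈ B := fun p hp => (key p hp).1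
    have hcard : A.card = ∑ q ∈ B, (A.filter (fun p => f p = q)).card :=
      Finset.card_eq_sum_card_fiberwise hmaps
    have hfiber : ∀ q ∈ B, ((A.filter (fun p => f p = q)).card : ℝ) ≤ C := by
      intro q hq
      simp only [hB, Finset.mem_filter] at hq
      obtain ⟨-, hq1, hq2, hqadj⟩ := hq
      have heG : s(q.1, q.2) ∈ G.edgeSet := hqadj
      refine le_trans ?_ (hcong s(q.1, q.2) heG)
      have : (A.filter (fun p => f p = q)).card ≤
          (Finset.univ.filter (fun p : V × V => p.1 < p.2 ∧
            ∃ h : H'.Adj p.1 p.2, s(q.1, q.2) ∈ (P p.1 p.2 h).edges)).card := by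
        apply Finset.card_le_card_of_injOn g
        · intro p hp
          simp only [Finset.mem_coe, Finset.mem_filter] at hp
          obtain ⟨hpA, hfq⟩ := hp
          obtain ⟨-, hglt, hh, hmem⟩ := key p hpA
          simp only [Finset.mem_coe, Finset.mem_filter, Finset.mem_univ, true_and]
          rw [hfq] at hmem
          exact ⟨hglt, hh, hmem⟩
        · intro p hp p' hp' heq
          simp only [Finset.coe_filter, Set.mem_setOf_eq, hA, Finset.mem_filter] at hp hp'
          obtain ⟨⟨-, hp1, hp2, -⟩, -⟩ := hp
          obtain ⟨⟨-, hp1', hp2', -⟩, -⟩ := hp'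
          simp only [g] at heq
          split_ifs at heq with h1 h2 h2
          · exact heq
          · exact absurd (by rw [heq]; exact hp1' : p.2 ∈ S) hp2
          · exact absurd (by rw [← heq]; exact hp1 : p'.2 ∈ S) hp2'
          · exact Prod.swap_injective heq
      exact_mod_cast le_trans (Nat.cast_le.mpr this) le_rfl
    have : (cutCard H' S : ℝ) = ((∑ q ∈ B, (A.filter (fun p => f p = q)).card : ℕ) : ℝ) := by
      have eH' : cutCard H' S = A.card := by
        unfold cutCard; rw [hA]; congr 1; ext p; simp
      rw [eH', hcard]
    rw [this]
    push_cast
    calc (∑ q ∈ B, ((A.filter (fun p => f p = q)).card : ℝ))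
        ≤ ∑ q ∈ B, C := Finset.sum_le_sum hfiber
      _ = C * B.card := by rw [Finset.sum_const, nsmul_eq_mul, mul_comm]
      _ = C * (cutCard G S : ℝ) := by
          have eG : cutCard G S = B.card := by
            unfold cutCard; rw [hB]; congr 1; ext p; simp
          rw [eG]
  -- combine
  have hmiss' : ((H.edgeFinset \ H'.edgeFinset).card : ℝ) ≤ ψ / 2 * (S.card : ℝ) := by
    calc ((H.edgeFinset \ H'.edgeFinset).card : ℝ) ≤ ψ / 2 * b * (Fintype.card V) := hmiss
      _ = ψ / 2 * (b * (Fintype.card V)) := by ring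
      _ ≤ ψ / 2 * (S.card : ℝ) := by
          apply mul_le_mul_of_nonneg_left hS1 (by linarith)
  have hkey : ψ / 2 * (S.card : ℝ) ≤ C * (cutCard G S : ℝ) := by linarith
  rw [div_mul_eq_mul_div, div_le_iff₀ (by linarith : (0:ℝ) < 2 * C)]
  linarith
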